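/- Let Σ be a finite set, n ≥ 2, and c_1,…,c_n : Σ → ℂ. Assume that the space of linear relations {λ ∈ ℂ^n : ∑_{i=1}^n λ_i c_i = 0} is exactly the one-dimensional span of the all-ones vector (1,1,…,1); in particular ∑_{i=1}^n c_i = 0 and every linear relation between the c_i is a multiple of this one. Fix an integer a ≥ 2 and let 𝒜 be any family of a-element subsets A of {1,…,n} such that for every A ∈ 𝒜 the supports of the functions c_i, i ∈ A, are pairwise disjoint. Then the family (Φ_A)_{A ∈ 𝒜} is linearly independent in H_a. (Theorem 5: for codimension-one systems, all a-magnon states with a > 1 are linearly independent.) -/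

import Mathlib

/-- The localized `a`-magnon product state `Φ(c_1,…,c_a)` as a function on finite subsets
of `Σ` (an element of `H_a`). -/
noncomputable def magnon {σ : Type*} [Fintype σ] [DecidableEq σ]
    {ι : Type*} [Fintype ι] [DecidableEq ι] (c : ι → σ → ℂ) : Finset σ → ℂ :=
  fun S => ∑ g : ι → σ,
    if Function.Injective g ∧ Finset.image g Finset.univ = S then ∏ j, c j (g j) else 0

/-- For an `a`-element subset `A ⊆ {1,…,n}` of indices, `Φ_A := Φ((c_i)_{i ∈ A})`. -/
noncomputable def magnonSet {σ : Type*} [Fintype σ] [DecidableEq σ] {n : ℕ}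
    (c : Fin n → σ → ℂ) (A : Finset (Fin n)) : Finset σ → ℂ :=
  magnon (fun i : ↥A => c i.1)

open Finset Matrix MvPolynomial


lemma prodX {ι : Type*} [DecidableEq ι] (s : Finset ι) :
    (∏ i ∈ s, X i : MvPolynomial ι ℂ) = monomial (∑ i ∈ s, Finsupp.single i 1) 1 := by
  classical
  induction s using Finset.induction with
  | empty => simp [monomial_zero']
  | insert _ _ h ih =>
      rw [Finset.prod_insert h, Finset.sum_insert h, ih, X, monomial_mul, one_mul]

lemma esum_apply {ι : Type*} [DecidableEq ι] (s : Finset ι) (x : ι) :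
    (∑ i ∈ s, Finsupp.single i 1 : ι →₀ ℕ) x = if x ∈ s then 1 else 0 := by
  classical
  rw [Finsupp.coe_finset_sum, Finset.sum_apply]
  simp [Finsupp.single_apply]

lemma claimC {n : ℕ} (𝒜 : Finset (Finset (Fin n))) (lam : ↥𝒜 → ℂ)
    (h : ∀ t : Fin n → ℂ, ∑ i, t i = 0 → ∑ A : ↥𝒜, lam A * ∏ i ∈ A.1, t i = 0)
    (A₀ : ↥𝒜) (j k : Fin n) (hj : j ∈ A₀.1) (hk : k ∈ A₀.1) (hjk : j ≠ k) :
    lam A₀ = 0 := by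
  classical
  set φ : Fin n → MvPolynomial (Fin n) ℂ :=
    fun i => if i = j then -∑ m ∈ univ.erase j, X m else X i with hφ
  set p : MvPolynomial (Fin n) ℂ := ∑ A : ↥𝒜, MvPolynomial.C (lam A) * ∏ i ∈ A.1, φ i with hp
  have hkj : k ∈ A₀.1.erase j := Finset.mem_erase.2 ⟨fun hh => hjk hh.symm, hk⟩
  -- p = 0
  have hpz : p = 0 := by
    apply MvPolynomial.funext
    intro u
    rw [map_zero, hp, map_sum]
    set t : Fin n → ℂ := fun i => if i = j then -∑ m ∈ univ.erase j, u m else u i with ht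
    have hev : ∀ A : ↥𝒜, eval u (MvPolynomial.C (lam A) * ∏ i ∈ A.1, φ i)
        = lam A * ∏ i ∈ A.1, t i := by
      intro A
      rw [_root_.map_mul, eval_C, eval_prod]
      congr 1
      refine Finset.prod_congr rfl fun i _ => ?_
      by_cases hij : i = j <;> simp [hφ, ht, hij]
    rw [Finset.sum_congr rfl (fun A _ => hev A)]
    apply h
    have h1 : ∑ i ∈ univ.erase j, t i = ∑ i ∈ univ.erase j, u i :=
      Finset.sum_congr rfl fun i hi => by simp [ht, (Finset.mem_erase.1 hi).1]
    rw [← Finset.add_sum_erase univ t (Finset.mem_univ j), h1]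
    simp [ht]
  -- the test monomial
  set d : Fin n →₀ ℕ := Finsupp.single k 1 + ∑ i ∈ A₀.1.erase j, Finsupp.single i 1 with hd
  have hdk : d k = 2 := by
    rw [hd, Finsupp.add_apply, Finsupp.single_apply, esum_apply]
    simp [hkj]
  -- coefficient of d in each term
  have hcoeff : ∀ A : ↥𝒜, coeff d (∏ i ∈ A.1, φ i) = if A = A₀ then -1 else 0 := by
    intro A
    by_cases hjA : j ∈ A.1
    · -- j ∈ A
      have hsplit : ∏ i ∈ A.1, φ i
          = (-∑ m ∈ univ.erase j, X m) * monomial (∑ i ∈ A.1.erase j, Finsupp.single i 1) 1 := by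
        rw [← Finset.mul_prod_erase A.1 φ hjA]
        congr 1
        · simp [hφ]
        · rw [← prodX]
          exact Finset.prod_congr rfl fun i hi => by simp [hφ, (Finset.mem_erase.1 hi).1]
      rw [hsplit, neg_mul, Finset.sum_mul, coeff_neg]
      have hmon : ∀ m ∈ univ.erase j,
          (X m : MvPolynomial (Fin n) ℂ) * monomial (∑ i ∈ A.1.erase j, Finsupp.single i 1) 1
          = monomial (Finsupp.single m 1 + ∑ i ∈ A.1.erase j, Finsupp.single i 1) 1 := by
        intro m _
        rw [X, monomial_mul, one_mul]
      rw [Finset.sum_congr rfl hmon, coeff_sum]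
      have hiff : ∀ m : Fin n,
          (Finsupp.single m 1 + ∑ i ∈ A.1.erase j, Finsupp.single i 1 = d)
          ↔ (m = k ∧ A.1.erase j = A₀.1.erase j) := by
        intro m
        constructor
        · intro hEq
          have hv : ∀ x, (if m = x then 1 else 0) + (if x ∈ A.1.erase j then 1 else 0)
              = (if k = x then 1 else 0) + (if x ∈ A₀.1.erase j then (1:ℕ) else 0) := by
            intro x
            have := congrArg (fun f : Fin n →₀ ℕ => f x) hEq
            simpa [hd, Finsupp.add_apply, Finsupp.single_apply, esum_apply] using this
          have hmk : m = k := by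
            have := hv k
            by_contra hne
            simp [hne, hkj] at this
            split at this <;> omega
          refine ⟨hmk, ?_⟩
          ext x
          have := hv x
          rw [hmk] at this
          by_cases hx1 : x ∈ A.1.erase j <;> by_cases hx2 : x ∈ A₀.1.erase j <;>
            simp [hx1, hx2] at this ⊢ <;> split at this <;> omega
        · rintro ⟨rfl, hA⟩
          rw [hd, hA]
      have hsum : ∀ m ∈ univ.erase j,
          coeff d (monomial (Finsupp.single m 1 + ∑ i ∈ A.1.erase j, Finsupp.single i 1)
            (1 : ℂ))
          = if m = k ∧ A.1.erase j = A₀.1.erase j then 1 else 0 := by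
        intro m _
        rw [coeff_monomial]
        simp only [hiff m]
      rw [Finset.sum_congr rfl hsum]
      by_cases hA : A.1.erase j = A₀.1.erase j
      · have hAA : A = A₀ := by
          apply Subtype.ext
          rw [← Finset.insert_erase hjA, hA, Finset.insert_erase hj]
        simp only [hA, and_true, hAA, if_pos rfl]
        rw [Finset.sum_ite_eq' (univ.erase j) k (fun _ => (1:ℂ))]
        have hkj' : k ≠ j := fun hh => hjk hh.symm
        simp [hkj']
      · have hAA : A ≠ A₀ := by
          intro hh; exact hA (by rw [hh])
        simp [hA, hAA]
    · -- j ∉ A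
      have : ∏ i ∈ A.1, φ i = monomial (∑ i ∈ A.1, Finsupp.single i 1) 1 := by
        rw [← prodX]
        refine Finset.prod_congr rfl fun i hi => ?_
        have hij : i ≠ j := fun hh => hjA (hh ▸ hi)
        simp [hφ, hij]
      rw [this, coeff_monomial]
      have hne : (∑ i ∈ A.1, Finsupp.single i 1 : Fin n →₀ ℕ) ≠ d := by
        intro hh
        have h2 : (∑ i ∈ A.1, Finsupp.single i 1 : Fin n →₀ ℕ) k = d k := by rw [hh]
        rw [hdk, esum_apply] at h2
        split at h2 <;> omega
      have hAA : A ≠ A₀ := by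
        intro hh
        subst hh
        exact hjA hj
      simp [hne, hAA]
  -- conclude
  have h0 : coeff d p = 0 := by rw [hpz, coeff_zero]
  rw [hp, coeff_sum] at h0
  have h1 : ∀ A : ↥𝒜, coeff d (MvPolynomial.C (lam A) * ∏ i ∈ A.1, φ i)
      = if A = A₀ then -lam A₀ else 0 := by
    intro A
    rw [coeff_C_mul, hcoeff A]
    by_cases hAA : A = A₀ <;> simp [hAA]
  rw [Finset.sum_congr rfl (fun A _ => h1 A),
    Finset.sum_ite_eq' univ A₀ (fun _ => -lam A₀)] at h0
  simpa using h0



lemma claimA {σ : Type*} [Fintype σ] [DecidableEq σ] {n : ℕ} (c : Fin n → σ → ℂ)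
    (A : Finset (Fin n))
    (hd : ∀ i ∈ A, ∀ j ∈ A, i ≠ j →
      Disjoint (Function.support (c i)) (Function.support (c j)))
    (y : σ → ℂ) :
    ∑ S : Finset σ, magnonSet c A S * ∏ μ ∈ S, y μ
      = ∏ i : ↥A, (∑ μ : σ, c i.1 μ * y μ) := by
  classical
  rw [Finset.prod_univ_sum (fun _ : ↥A => (univ : Finset σ))
    (fun i μ => c i.1 μ * y μ)]
  rw [Fintype.piFinset_univ]
  unfold magnonSet magnon
  have step1 : ∀ S : Finset σ,
      (∑ g : ↥A → σ, if Function.Injective g ∧ image g univ = S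
          then ∏ j : ↥A, c j.1 (g j) else 0) * ∏ μ ∈ S, y μ
      = ∑ g : ↥A → σ, (if Function.Injective g ∧ image g univ = S
          then ∏ j : ↥A, c j.1 (g j) else 0) * ∏ μ ∈ S, y μ :=
    fun S => Finset.sum_mul _ _ _
  rw [Finset.sum_congr rfl (fun S _ => step1 S), Finset.sum_comm]
  refine Finset.sum_congr rfl fun g _ => ?_
  by_cases hg : Function.Injective g
  · have h2 : ∀ S : Finset σ,
        (if Function.Injective g ∧ image g univ = S then ∏ j : ↥A, c j.1 (g j) else 0)
            * ∏ μ ∈ S, y μ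
        = if image g univ = S then (∏ j : ↥A, c j.1 (g j)) * ∏ μ ∈ S, y μ else 0 := by
      intro S
      simp [hg, ite_mul]
      exact if_congr Iff.rfl rfl rfl
    rw [Finset.sum_congr rfl (fun S _ => h2 S),
      Finset.sum_ite_eq univ (image g univ) (fun S => (∏ j : ↥A, c j.1 (g j)) * ∏ μ ∈ S, y μ)]
    simp only [mem_univ, if_pos]
    rw [Finset.prod_image (fun x _ x' _ hxx => hg hxx), ← Finset.prod_mul_distrib]
  · simp only [hg, false_and, if_false, zero_mul, Finset.sum_const_zero]
    obtain ⟨i, i', hgii, hne⟩ := Function.not_injective_iff.1 hg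
    symm
    by_cases hci : c i.1 (g i) = 0
    · exact Finset.prod_eq_zero (mem_univ i) (by rw [hci, zero_mul])
    · refine Finset.prod_eq_zero (mem_univ i') ?_
      have hii : i.1 ≠ i'.1 := fun hh => hne (Subtype.ext hh)
      have hdisj := hd i.1 i.2 i'.1 i'.2 hii
      have hz : c i'.1 (g i') = 0 := by
        by_contra hci'
        have h1 : g i ∈ Function.support (c i.1) := hci
        have h2 : g i ∈ Function.support (c i'.1) := by rw [hgii]; exact hci'
        exact Set.disjoint_left.mp hdisj h1 h2
      rw [hz, zero_mul]


lemma surjH {σ : Type*} [Fintype σ] [DecidableEq σ] {n : ℕ} (hn : 2 ≤ n)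
    (c : Fin n → σ → ℂ)
    (hker : LinearMap.ker (Fintype.linearCombination ℂ c)
      = Submodule.span ℂ {(fun _ => 1 : Fin n → ℂ)})
    (t : Fin n → ℂ) (ht : ∑ i, t i = 0) :
    ∃ y : σ → ℂ, ∀ i, ∑ μ : σ, c i μ * y μ = t i := by
  classical
  have hn0 : 0 < n := lt_of_lt_of_le two_pos hn
  set M : Matrix (Fin n) σ ℂ := Matrix.of (fun i μ => c i μ) with hM
  -- identify transpose mulVecLin with linearCombination
  have hT : (Mᵀ).mulVecLin = Fintype.linearCombination ℂ c := by
    apply LinearMap.ext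
    intro v
    funext μ
    simp [Matrix.mulVecLin_apply, Matrix.mulVec, Matrix.vecMul, dotProduct, hM,
      Fintype.linearCombination_apply, mul_comm]
  -- the all-ones vector is nonzero
  have hone : (fun _ => 1 : Fin n → ℂ) ≠ 0 := by
    intro hh
    have := congrFun hh ⟨0, hn0⟩
    simp at this
  have hkerT : Module.finrank ℂ (LinearMap.ker (Mᵀ).mulVecLin) = 1 := by
    rw [hT, hker, finrank_span_singleton hone]
  -- rank of M
  have hrankT : (Mᵀ).rank + 1 = n := by
    have h1 := LinearMap.finrank_range_add_finrank_ker (Mᵀ).mulVecLin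
    rw [hkerT, Module.finrank_pi] at h1
    rw [Matrix.rank, h1, Fintype.card_fin]
  have hrankM : M.rank + 1 = n := by rw [← Matrix.rank_transpose M]; exact hrankT
  set f : (Fin n → ℂ) →ₗ[ℂ] ℂ := ∑ i, LinearMap.proj i with hf
  have hfapp : ∀ v : Fin n → ℂ, f v = ∑ i, v i := by
    intro v; simp [hf]
  have hfsurj : LinearMap.range f = ⊤ := by
    rw [LinearMap.range_eq_top]
    intro z
    exact ⟨Pi.single ⟨0, hn0⟩ z, by rw [hfapp]; simp⟩
  have hkerf : Module.finrank ℂ (LinearMap.ker f) + 1 = n := by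
    have h1 := LinearMap.finrank_range_add_finrank_ker f
    rw [hfsurj, finrank_top, Module.finrank_self, Module.finrank_pi, Fintype.card_fin] at h1
    omega
  have hsumc : ∀ μ, ∑ i, c i μ = 0 := by
    have hmem : (fun _ => 1 : Fin n → ℂ) ∈ LinearMap.ker (Fintype.linearCombination ℂ c) := by
      rw [hker]; exact Submodule.mem_span_singleton_self _
    intro μ
    have h2 := congrFun (LinearMap.mem_ker.1 hmem) μ
    simpa [Fintype.linearCombination_apply] using h2
  have hle : LinearMap.range M.mulVecLin ≤ LinearMap.ker f := by
    rintro x ⟨y, rfl⟩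
    rw [LinearMap.mem_ker, hfapp]
    have h3 : ∀ i, M.mulVecLin y i = ∑ μ, c i μ * y μ := by
      intro i
      simp [Matrix.mulVecLin_apply, Matrix.mulVec, dotProduct, hM]
    rw [Finset.sum_congr rfl (fun i _ => h3 i), Finset.sum_comm]
    have h4 : ∀ μ : σ, ∑ i, c i μ * y μ = 0 := by
      intro μ
      rw [← Finset.sum_mul, hsumc μ, zero_mul]
    rw [Finset.sum_congr rfl (fun μ _ => h4 μ), Finset.sum_const_zero]
  have heq : LinearMap.range M.mulVecLin = LinearMap.ker f := by
    apply Submodule.eq_of_le_of_finrank_eq hle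
    have : Module.finrank ℂ (LinearMap.range M.mulVecLin) = M.rank := rfl
    omega
  have hmemt : t ∈ LinearMap.range M.mulVecLin := by
    rw [heq, LinearMap.mem_ker, hfapp]
    exact ht
  obtain ⟨y, hy⟩ := hmemt
  refine ⟨y, fun i => ?_⟩
  have h5 := congrFun hy i
  simpa [Matrix.mulVecLin_apply, Matrix.mulVec, dotProduct, hM] using h5

/-- Theorem 5: if the space of linear relations between the 1-magnon states `c_1,…,c_n` is
exactly the one-dimensional span of the all-ones vector (so `∑ᵢ cᵢ = 0` and every relation
is a multiple of this one), then for every `a ≥ 2` the localized `a`-magnon states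
`(Φ_A)_{A ∈ 𝒜}` supported on pairwise disjoint units are linearly independent. -/
theorem magnon_linearIndependent_of_codim_one
    {σ : Type*} [Fintype σ] [DecidableEq σ] {n a : ℕ} (hn : 2 ≤ n) (ha : 2 ≤ a)
    (c : Fin n → σ → ℂ)
    (hker : LinearMap.ker (Fintype.linearCombination ℂ c)
      = Submodule.span ℂ {(fun _ => 1 : Fin n → ℂ)})
    (𝒜 : Finset (Finset (Fin n)))
    (hcard : ∀ A ∈ 𝒜, A.card = a)
    (hdisj : ∀ A ∈ 𝒜, ∀ i ∈ A, ∀ j ∈ A, i ≠ j →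
      Disjoint (Function.support (c i)) (Function.support (c j))) :
    LinearIndependent ℂ (fun A : 𝒜 => magnonSet c A.1) := by
  classical
  rw [Fintype.linearIndependent_iff]
  intro g hsum A₀
  have hzero : ∀ S : Finset σ, ∑ A : ↥𝒜, g A * magnonSet c A.1 S = 0 := by
    intro S
    have h0 := congrFun hsum S
    simpa [Finset.sum_apply] using h0
  have key : ∀ t : Fin n → ℂ, ∑ i, t i = 0 → ∑ A : ↥𝒜, g A * ∏ i ∈ A.1, t i = 0 := by
    intro t ht
    obtain ⟨y, hy⟩ := surjH hn c hker t ht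
    have h1 : ∀ A : ↥𝒜, ∏ i ∈ A.1, t i
        = ∑ S : Finset σ, magnonSet c A.1 S * ∏ μ ∈ S, y μ := by
      intro A
      rw [claimA c A.1 (hdisj A.1 A.2) y, ← Finset.prod_coe_sort A.1 t]
      exact Finset.prod_congr rfl fun i _ => (hy i.1).symm
    rw [Finset.sum_congr rfl (fun A _ => by rw [h1 A])]
    have h2 : ∀ A : ↥𝒜, g A * ∑ S : Finset σ, magnonSet c A.1 S * ∏ μ ∈ S, y μ
        = ∑ S : Finset σ, g A * magnonSet c A.1 S * ∏ μ ∈ S, y μ := by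
      intro A
      rw [Finset.mul_sum]
      exact Finset.sum_congr rfl fun S _ => (mul_assoc _ _ _).symm
    rw [Finset.sum_congr rfl (fun A _ => h2 A), Finset.sum_comm]
    have h3 : ∀ S : Finset σ, ∑ A : ↥𝒜, g A * magnonSet c A.1 S * ∏ μ ∈ S, y μ = 0 := by
      intro S
      rw [← Finset.sum_mul, hzero S, zero_mul]
    rw [Finset.sum_congr rfl (fun S _ => h3 S), Finset.sum_const_zero]
  have hA₀ : 1 < A₀.1.card := by rw [hcard A₀.1 A₀.2]; omega
  obtain ⟨j, hj, k, hk, hjk⟩ := Finset.one_lt_card.1 hA₀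
  exact claimC 𝒜 g key A₀ j k hj hk hjk
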